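/- Theorem 3 (validity of bounds with a back-door set and a mediator): let P be a probability mass function on Ω' supported on the consistency event {(r,w,z,u_obs,t) : u_obs = w t}, let k ≤ n, and suppose that for every t₀ the random variable r t₀ is conditionally independent of X given (w t₀, Z₁,…,Z_m) under P, and for all t₀ ≠ t₁ the random variable r t₀ is conditionally independent of w t₁ given (w t₀, Z₁,…,Z_m) under P (these conditional independences hold when Z₁,…,Z_m is a back-door set for X and Y with mediator W). Let T(P) be the set of probability mass functions Q on Ω' supported on the consistency event that satisfy (i) the experimental constraints Q((r t) = s ∧ ⋀_{i∈I} Z_i = z_i) = P((r t) = s ∧ ⋀_{i∈I} Z_i = z_i) for all s, t, all I ⊆ {1,…,m} and values z_i; (ii) the observational constraints Q(X = t ∧ (r t) = s ∧ w t = u ∧ ⋀_{i∈I} Z_i = z_i) = P(X = t ∧ (r t) = s ∧ w t = u ∧ ⋀_{i∈I} Z_i = z_i) for all s, t, u, I and z_i; (iii) the bilinear equalities Q(r t = s ∧ w t = u ∧ Z = z)·Q(w t = u ∧ Z = z ∧ X = v) = Q(r t = s ∧ w t = u ∧ Z = z ∧ X = v)·Q(w t = u ∧ Z = z) for all s, t,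 v, u, z; and (iv) the bilinear equalities Q(r t = s ∧ w t = u ∧ Z = z)·Q(w t = u ∧ w t' = v ∧ Z = z) = Q(r t = s ∧ w t = u ∧ w t' = v ∧ Z = z)·Q(w t = u ∧ Z = z) for all s, t ≠ t', u, v, z. Then P ∈ T(P), T(P) is a nonempty compact set, the objective Q ↦ Q({ω : r s = s for all s < k}) attains a minimum LB and a maximum UB on T(P), and LB ≤ PNS(k) ≤ UB, where PNS(k) := P({ω : r s = s for all s < k}). -/

import Mathlib

/-- The probability of an event `E` under a mass function `P` on a finite type. -/
noncomputable def prob {Ω : Type*} [Fintype Ω] (P : Ω → ℝ) (E : Set Ω) : ℝ :=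
  ∑ ω, E.indicator P ω

/-- The probability simplex: nonnegative functions summing to one. -/
def simplexSet (Ω : Type*) [Fintype Ω] : Set (Ω → ℝ) :=
  {Q | (∀ ω, 0 ≤ Q ω) ∧ ∑ ω, Q ω = 1}

/-- The mediator sample space `Ω'`: potential outcomes `r : Fin n → Fin n`
(`r s` is `Y_{x_s}`), potential mediators `w : Fin n → W` (`w s` is `W_{x_s}`),
covariates `z : Π i, Z i`, observed mediator `u_obs : W`, and treatment `t : Fin n`. -/
abbrev MedOmega (n m : ℕ) (Z : Fin m → Type) [∀ i, Fintype (Z i)]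
    (W : Type) [Fintype W] : Type :=
  (Fin n → Fin n) × (Fin n → W) × ((i : Fin m) → Z i) × W × Fin n

/-- The consistency event `{ω : u_obs = w t}`. -/
def consEvent (n m : ℕ) (Z : Fin m → Type) [∀ i, Fintype (Z i)]
    (W : Type) [Fintype W] : Set (MedOmega n m Z W) :=
  {ω | ω.2.2.2.1 = ω.2.1 ω.2.2.2.2}

/-- The Theorem 3 feasible set `T(P)`: mass functions supported on the consistency event
satisfying (i) the experimental constraints, (ii) the observational constraints (with the
observed mediator), (iii) the bilinear mediator equalities, and (iv) the bilinear
cross-mediator equalities. -/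
def medFeasible (n m : ℕ) (Z : Fin m → Type) [∀ i, Fintype (Z i)]
    (W : Type) [Fintype W] (P : MedOmega n m Z W → ℝ) :
    Set (MedOmega n m Z W → ℝ) :=
  {Q | Q ∈ simplexSet (MedOmega n m Z W) ∧
    (∀ ω, ω ∉ consEvent n m Z W → Q ω = 0) ∧
    (∀ (s t : Fin n) (I : Finset (Fin m)) (zv : (i : Fin m) → Z i),
      prob Q {ω | ω.1 t = s ∧ ∀ i ∈ I, ω.2.2.1 i = zv i} =
        prob P {ω | ω.1 t = s ∧ ∀ i ∈ I, ω.2.2.1 i = zv i}) ∧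
    (∀ (s t : Fin n) (u : W) (I : Finset (Fin m)) (zv : (i : Fin m) → Z i),
      prob Q {ω | ω.2.2.2.2 = t ∧ ω.1 t = s ∧ ω.2.1 t = u ∧ ∀ i ∈ I, ω.2.2.1 i = zv i} =
        prob P {ω | ω.2.2.2.2 = t ∧ ω.1 t = s ∧ ω.2.1 t = u ∧ ∀ i ∈ I, ω.2.2.1 i = zv i}) ∧
    (∀ (s t v : Fin n) (u : W) (z : (i : Fin m) → Z i),
      prob Q {ω | ω.1 t = s ∧ ω.2.1 t = u ∧ ω.2.2.1 = z} *
          prob Q {ω | ω.2.1 t = u ∧ ω.2.2.1 = z ∧ ω.2.2.2.2 = v} =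
        prob Q {ω | ω.1 t = s ∧ ω.2.1 t = u ∧ ω.2.2.1 = z ∧ ω.2.2.2.2 = v} *
          prob Q {ω | ω.2.1 t = u ∧ ω.2.2.1 = z}) ∧
    (∀ (s t t' : Fin n), t ≠ t' → ∀ (u v : W) (z : (i : Fin m) → Z i),
      prob Q {ω | ω.1 t = s ∧ ω.2.1 t = u ∧ ω.2.2.1 = z} *
          prob Q {ω | ω.2.1 t = u ∧ ω.2.1 t' = v ∧ ω.2.2.1 = z} =
        prob Q {ω | ω.1 t = s ∧ ω.2.1 t = u ∧ ω.2.1 t' = v ∧ ω.2.2.1 = z} *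
          prob Q {ω | ω.2.1 t = u ∧ ω.2.2.1 = z})}

/-- The PNS(k) event `{ω : r s = s for all s < k}` (after relabeling of outcomes). -/
def pnsEventMed (n m : ℕ) (Z : Fin m → Type) [∀ i, Fintype (Z i)]
    (W : Type) [Fintype W] (k : ℕ) : Set (MedOmega n m Z W) :=
  {ω | ∀ s : Fin n, (s : ℕ) < k → ω.1 s = s}

section Helpers

variable {Ω : Type*} [Fintype Ω]

lemma prob_nonneg' (P : Ω → ℝ) (hP : ∀ ω, 0 ≤ P ω) (E : Set Ω) : 0 ≤ prob P E := by
  classical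
  exact Finset.sum_nonneg fun ω _ => Set.indicator_nonneg (fun ω _ => hP ω) ω

lemma prob_mono' (P : Ω → ℝ) (hP : ∀ ω, 0 ≤ P ω) {E F : Set Ω} (h : E ⊆ F) :
    prob P E ≤ prob P F := by
  classical
  exact Finset.sum_le_sum fun ω _ => Set.indicator_le_indicator_of_subset h hP ω

lemma prob_eq_zero_of_subset' (P : Ω → ℝ) (hP : ∀ ω, 0 ≤ P ω) {E F : Set Ω}
    (h : E ⊆ F) (hF : prob P F = 0) : prob P E = 0 :=
  le_antisymm (hF ▸ prob_mono' P hP h) (prob_nonneg' P hP E)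

lemma continuous_prob' (E : Set Ω) : Continuous fun Q : Ω → ℝ => prob Q E := by
  classical
  unfold prob
  refine continuous_finset_sum _ fun ω _ => ?_
  simp only [Set.indicator_apply]
  by_cases h : ω ∈ E
  · simpa [h] using continuous_apply (A := fun _ : Ω => ℝ) ω
  · simp only [if_neg h]; exact continuous_const

end Helpers

/-- Theorem 3 (validity of bounds with a back-door set and a mediator): if `P` is supported
on the consistency event and satisfies the two families of conditional independences
`r t₀ ⫫ X ∣ (w t₀, Z)` and `r t₀ ⫫ w t₁ ∣ (w t₀, Z)` (for `t₀ ≠ t₁`), then `P ∈ T(P)`,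
`T(P)` is a nonempty compact set, the objective attains a minimum `LB` and a maximum `UB`
on `T(P)`, and `LB ≤ PNS(k) ≤ UB`. -/
theorem theorem3_valid_bounds
    (n m : ℕ) (Z : Fin m → Type) [∀ i, Fintype (Z i)] [∀ i, Nonempty (Z i)]
    (W : Type) [Fintype W] [Nonempty W]
    (P : MedOmega n m Z W → ℝ) (hP : P ∈ simplexSet (MedOmega n m Z W))
    (hsupp : ∀ ω, ω ∉ consEvent n m Z W → P ω = 0)
    (k : ℕ) (hk : k ≤ n)
    (hCI1 : ∀ (t₀ : Fin n) (u : W) (z₀ : (i : Fin m) → Z i),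
      0 < prob P {ω | ω.2.1 t₀ = u ∧ ω.2.2.1 = z₀} →
      ∀ (s v : Fin n),
        prob P {ω | ω.1 t₀ = s ∧ ω.2.2.2.2 = v ∧ ω.2.1 t₀ = u ∧ ω.2.2.1 = z₀} /
            prob P {ω | ω.2.1 t₀ = u ∧ ω.2.2.1 = z₀} =
          (prob P {ω | ω.1 t₀ = s ∧ ω.2.1 t₀ = u ∧ ω.2.2.1 = z₀} /
            prob P {ω | ω.2.1 t₀ = u ∧ ω.2.2.1 = z₀}) *
          (prob P {ω | ω.2.2.2.2 = v ∧ ω.2.1 t₀ = u ∧ ω.2.2.1 = z₀} /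
            prob P {ω | ω.2.1 t₀ = u ∧ ω.2.2.1 = z₀}))
    (hCI2 : ∀ (t₀ t₁ : Fin n), t₀ ≠ t₁ → ∀ (u : W) (z₀ : (i : Fin m) → Z i),
      0 < prob P {ω | ω.2.1 t₀ = u ∧ ω.2.2.1 = z₀} →
      ∀ (s : Fin n) (v : W),
        prob P {ω | ω.1 t₀ = s ∧ ω.2.1 t₁ = v ∧ ω.2.1 t₀ = u ∧ ω.2.2.1 = z₀} /
            prob P {ω | ω.2.1 t₀ = u ∧ ω.2.2.1 = z₀} =
          (prob P {ω | ω.1 t₀ = s ∧ ω.2.1 t₀ = u ∧ ω.2.2.1 = z₀} /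
            prob P {ω | ω.2.1 t₀ = u ∧ ω.2.2.1 = z₀}) *
          (prob P {ω | ω.2.1 t₁ = v ∧ ω.2.1 t₀ = u ∧ ω.2.2.1 = z₀} /
            prob P {ω | ω.2.1 t₀ = u ∧ ω.2.2.1 = z₀})) :
    P ∈ medFeasible n m Z W P ∧
    (medFeasible n m Z W P).Nonempty ∧
    IsCompact (medFeasible n m Z W P) ∧
    ∃ LB UB : ℝ,
      IsLeast ((fun Q => prob Q (pnsEventMed n m Z W k)) '' medFeasible n m Z W P) LB ∧
      IsGreatest ((fun Q => prob Q (pnsEventMed n m Z W k)) '' medFeasible n m Z W P) UB ∧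
      LB ≤ prob P (pnsEventMed n m Z W k) ∧ prob P (pnsEventMed n m Z W k) ≤ UB := by
  classical
  have hPnn := hP.1
  -- P satisfies the bilinear constraint (iii)
  have cond5 : ∀ (s t v : Fin n) (u : W) (z : (i : Fin m) → Z i),
      prob P {ω : MedOmega n m Z W | ω.1 t = s ∧ ω.2.1 t = u ∧ ω.2.2.1 = z} *
          prob P {ω : MedOmega n m Z W | ω.2.1 t = u ∧ ω.2.2.1 = z ∧ ω.2.2.2.2 = v} =
        prob P {ω : MedOmega n m Z W | ω.1 t = s ∧ ω.2.1 t = u ∧ ω.2.2.1 = z ∧ ω.2.2.2.2 = v} *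
          prob P {ω : MedOmega n m Z W | ω.2.1 t = u ∧ ω.2.2.1 = z} := by
    intro s t v u z
    have hB : {ω : MedOmega n m Z W | ω.2.1 t = u ∧ ω.2.2.1 = z ∧ ω.2.2.2.2 = v} =
        {ω : MedOmega n m Z W | ω.2.2.2.2 = v ∧ ω.2.1 t = u ∧ ω.2.2.1 = z} := by
      ext ω; simp only [Set.mem_setOf_eq]; tauto
    have hC : {ω : MedOmega n m Z W | ω.1 t = s ∧ ω.2.1 t = u ∧ ω.2.2.1 = z ∧ ω.2.2.2.2 = v} =
        {ω : MedOmega n m Z W | ω.1 t = s ∧ ω.2.2.2.2 = v ∧ ω.2.1 t = u ∧ ω.2.2.1 = z} := by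
      ext ω; simp only [Set.mem_setOf_eq]; tauto
    rw [hB, hC]
    rcases lt_or_eq_of_le (prob_nonneg' P hPnn
        {ω : MedOmega n m Z W | ω.2.1 t = u ∧ ω.2.2.1 = z}) with hpos | hzero
    · have h := hCI1 t u z hpos s v
      have hDne : prob P {ω : MedOmega n m Z W | ω.2.1 t = u ∧ ω.2.2.1 = z} ≠ 0 :=
        ne_of_gt hpos
      field_simp at h
      have h2 : prob P {ω : MedOmega n m Z W | ω.1 t = s ∧ ω.2.2.2.2 = v ∧ ω.2.1 t = u ∧ ω.2.2.1 = z} *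
          prob P {ω : MedOmega n m Z W | ω.2.1 t = u ∧ ω.2.2.1 = z} =
          prob P {ω : MedOmega n m Z W | ω.1 t = s ∧ ω.2.1 t = u ∧ ω.2.2.1 = z} *
          prob P {ω : MedOmega n m Z W | ω.2.2.2.2 = v ∧ ω.2.1 t = u ∧ ω.2.2.1 = z} :=
        mul_right_cancel₀ hDne (by rw [h])
      linarith [h2]
    · have hB0 : prob P {ω : MedOmega n m Z W | ω.2.2.2.2 = v ∧ ω.2.1 t = u ∧ ω.2.2.1 = z} = 0 :=
        prob_eq_zero_of_subset' P hPnn (by intro ω hω; simp only [Set.mem_setOf_eq] at hω ⊢; exact ⟨hω.2.1, hω.2.2⟩) hzero.symm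
      have hC0 : prob P {ω : MedOmega n m Z W | ω.1 t = s ∧ ω.2.2.2.2 = v ∧ ω.2.1 t = u ∧ ω.2.2.1 = z} = 0 :=
        prob_eq_zero_of_subset' P hPnn (by intro ω hω; simp only [Set.mem_setOf_eq] at hω ⊢; exact ⟨hω.2.2.1, hω.2.2.2⟩) hzero.symm
      rw [hB0, hC0, mul_zero, zero_mul]
  -- P satisfies the bilinear constraint (iv)
  have cond6 : ∀ (s t t' : Fin n), t ≠ t' → ∀ (u v : W) (z : (i : Fin m) → Z i),
      prob P {ω : MedOmega n m Z W | ω.1 t = s ∧ ω.2.1 t = u ∧ ω.2.2.1 = z} *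
          prob P {ω : MedOmega n m Z W | ω.2.1 t = u ∧ ω.2.1 t' = v ∧ ω.2.2.1 = z} =
        prob P {ω : MedOmega n m Z W | ω.1 t = s ∧ ω.2.1 t = u ∧ ω.2.1 t' = v ∧ ω.2.2.1 = z} *
          prob P {ω : MedOmega n m Z W | ω.2.1 t = u ∧ ω.2.2.1 = z} := by
    intro s t t' hne u v z
    have hB : {ω : MedOmega n m Z W | ω.2.1 t = u ∧ ω.2.1 t' = v ∧ ω.2.2.1 = z} =
        {ω : MedOmega n m Z W | ω.2.1 t' = v ∧ ω.2.1 t = u ∧ ω.2.2.1 = z} := by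
      ext ω; simp only [Set.mem_setOf_eq]; tauto
    have hC : {ω : MedOmega n m Z W | ω.1 t = s ∧ ω.2.1 t = u ∧ ω.2.1 t' = v ∧ ω.2.2.1 = z} =
        {ω : MedOmega n m Z W | ω.1 t = s ∧ ω.2.1 t' = v ∧ ω.2.1 t = u ∧ ω.2.2.1 = z} := by
      ext ω; simp only [Set.mem_setOf_eq]; tauto
    rw [hB, hC]
    rcases lt_or_eq_of_le (prob_nonneg' P hPnn
        {ω : MedOmega n m Z W | ω.2.1 t = u ∧ ω.2.2.1 = z}) with hpos | hzero
    · have h := hCI2 t t' hne u z hpos s v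
      have hDne : prob P {ω : MedOmega n m Z W | ω.2.1 t = u ∧ ω.2.2.1 = z} ≠ 0 :=
        ne_of_gt hpos
      field_simp at h
      have h2 : prob P {ω : MedOmega n m Z W | ω.1 t = s ∧ ω.2.1 t' = v ∧ ω.2.1 t = u ∧ ω.2.2.1 = z} *
          prob P {ω : MedOmega n m Z W | ω.2.1 t = u ∧ ω.2.2.1 = z} =
          prob P {ω : MedOmega n m Z W | ω.1 t = s ∧ ω.2.1 t = u ∧ ω.2.2.1 = z} *
          prob P {ω : MedOmega n m Z W | ω.2.1 t' = v ∧ ω.2.1 t = u ∧ ω.2.2.1 = z} :=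
        mul_right_cancel₀ hDne (by rw [h])
      linarith [h2]
    · have hB0 : prob P {ω : MedOmega n m Z W | ω.2.1 t' = v ∧ ω.2.1 t = u ∧ ω.2.2.1 = z} = 0 :=
        prob_eq_zero_of_subset' P hPnn (by intro ω hω; simp only [Set.mem_setOf_eq] at hω ⊢; exact ⟨hω.2.1, hω.2.2⟩) hzero.symm
      have hC0 : prob P {ω : MedOmega n m Z W | ω.1 t = s ∧ ω.2.1 t' = v ∧ ω.2.1 t = u ∧ ω.2.2.1 = z} = 0 :=
        prob_eq_zero_of_subset' P hPnn (by intro ω hω; simp only [Set.mem_setOf_eq] at hω ⊢; exact ⟨hω.2.2.1, hω.2.2.2⟩) hzero.symm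
      rw [hB0, hC0, mul_zero, zero_mul]
  have hPmem : P ∈ medFeasible n m Z W P :=
    ⟨hP, hsupp, fun _ _ _ _ => rfl, fun _ _ _ _ _ => rfl, cond5, cond6⟩
  have hne : (medFeasible n m Z W P).Nonempty := ⟨P, hPmem⟩
  -- closedness
  have hclosed : IsClosed (medFeasible n m Z W P) := by
    have hsimp : IsClosed (simplexSet (MedOmega n m Z W)) := by
      have : simplexSet (MedOmega n m Z W) =
          (⋂ ω : MedOmega n m Z W, {Q : MedOmega n m Z W → ℝ | 0 ≤ Q ω}) ∩
          {Q : MedOmega n m Z W → ℝ | ∑ ω, Q ω = 1} := by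
        ext Q; simp [simplexSet, Set.mem_iInter]
      rw [this]
      exact (isClosed_iInter fun ω =>
          isClosed_le continuous_const (continuous_apply ω)).inter
        (isClosed_eq (continuous_finset_sum _ fun ω _ => continuous_apply ω) continuous_const)
    have h2 : IsClosed {Q : MedOmega n m Z W → ℝ | ∀ ω, ω ∉ consEvent n m Z W → Q ω = 0} := by
      have : {Q : MedOmega n m Z W → ℝ | ∀ ω, ω ∉ consEvent n m Z W → Q ω = 0} =
          ⋂ ω : MedOmega n m Z W, ⋂ (_ : ω ∉ consEvent n m Z W),
            {Q : MedOmega n m Z W → ℝ | Q ω = 0} := by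
        ext Q; simp [Set.mem_iInter]
      rw [this]
      exact isClosed_iInter fun ω => isClosed_iInter fun _ =>
        isClosed_eq (continuous_apply ω) continuous_const
    have h3 : IsClosed {Q : MedOmega n m Z W → ℝ |
        ∀ (s t : Fin n) (I : Finset (Fin m)) (zv : (i : Fin m) → Z i),
          prob Q {ω | ω.1 t = s ∧ ∀ i ∈ I, ω.2.2.1 i = zv i} =
            prob P {ω | ω.1 t = s ∧ ∀ i ∈ I, ω.2.2.1 i = zv i}} := by
      have : {Q : MedOmega n m Z W → ℝ |
          ∀ (s t : Fin n) (I : Finset (Fin m)) (zv : (i : Fin m) → Z i),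
            prob Q {ω | ω.1 t = s ∧ ∀ i ∈ I, ω.2.2.1 i = zv i} =
              prob P {ω | ω.1 t = s ∧ ∀ i ∈ I, ω.2.2.1 i = zv i}} =
          ⋂ (s : Fin n), ⋂ (t : Fin n), ⋂ (I : Finset (Fin m)), ⋂ (zv : (i : Fin m) → Z i),
            {Q : MedOmega n m Z W → ℝ |
              prob Q {ω | ω.1 t = s ∧ ∀ i ∈ I, ω.2.2.1 i = zv i} =
                prob P {ω | ω.1 t = s ∧ ∀ i ∈ I, ω.2.2.1 i = zv i}} := by
        ext Q; simp [Set.mem_iInter]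
      rw [this]
      exact isClosed_iInter fun s => isClosed_iInter fun t => isClosed_iInter fun I =>
        isClosed_iInter fun zv => isClosed_eq (continuous_prob' _) continuous_const
    have h4 : IsClosed {Q : MedOmega n m Z W → ℝ |
        ∀ (s t : Fin n) (u : W) (I : Finset (Fin m)) (zv : (i : Fin m) → Z i),
          prob Q {ω | ω.2.2.2.2 = t ∧ ω.1 t = s ∧ ω.2.1 t = u ∧ ∀ i ∈ I, ω.2.2.1 i = zv i} =
            prob P {ω | ω.2.2.2.2 = t ∧ ω.1 t = s ∧ ω.2.1 t = u ∧ ∀ i ∈ I, ω.2.2.1 i = zv i}} := by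
      have : {Q : MedOmega n m Z W → ℝ |
          ∀ (s t : Fin n) (u : W) (I : Finset (Fin m)) (zv : (i : Fin m) → Z i),
            prob Q {ω | ω.2.2.2.2 = t ∧ ω.1 t = s ∧ ω.2.1 t = u ∧ ∀ i ∈ I, ω.2.2.1 i = zv i} =
              prob P {ω | ω.2.2.2.2 = t ∧ ω.1 t = s ∧ ω.2.1 t = u ∧ ∀ i ∈ I, ω.2.2.1 i = zv i}} =
          ⋂ (s : Fin n), ⋂ (t : Fin n), ⋂ (u : W), ⋂ (I : Finset (Fin m)),
            ⋂ (zv : (i : Fin m) → Z i),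
            {Q : MedOmega n m Z W → ℝ |
              prob Q {ω | ω.2.2.2.2 = t ∧ ω.1 t = s ∧ ω.2.1 t = u ∧ ∀ i ∈ I, ω.2.2.1 i = zv i} =
                prob P {ω | ω.2.2.2.2 = t ∧ ω.1 t = s ∧ ω.2.1 t = u ∧ ∀ i ∈ I, ω.2.2.1 i = zv i}} := by
        ext Q; simp [Set.mem_iInter]
      rw [this]
      exact isClosed_iInter fun s => isClosed_iInter fun t => isClosed_iInter fun u =>
        isClosed_iInter fun I => isClosed_iInter fun zv =>
          isClosed_eq (continuous_prob' _) continuous_const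
    have h5 : IsClosed {Q : MedOmega n m Z W → ℝ |
        ∀ (s t v : Fin n) (u : W) (z : (i : Fin m) → Z i),
          prob Q {ω | ω.1 t = s ∧ ω.2.1 t = u ∧ ω.2.2.1 = z} *
              prob Q {ω | ω.2.1 t = u ∧ ω.2.2.1 = z ∧ ω.2.2.2.2 = v} =
            prob Q {ω | ω.1 t = s ∧ ω.2.1 t = u ∧ ω.2.2.1 = z ∧ ω.2.2.2.2 = v} *
              prob Q {ω | ω.2.1 t = u ∧ ω.2.2.1 = z}} := by
      have : {Q : MedOmega n m Z W → ℝ |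
          ∀ (s t v : Fin n) (u : W) (z : (i : Fin m) → Z i),
            prob Q {ω | ω.1 t = s ∧ ω.2.1 t = u ∧ ω.2.2.1 = z} *
                prob Q {ω | ω.2.1 t = u ∧ ω.2.2.1 = z ∧ ω.2.2.2.2 = v} =
              prob Q {ω | ω.1 t = s ∧ ω.2.1 t = u ∧ ω.2.2.1 = z ∧ ω.2.2.2.2 = v} *
                prob Q {ω | ω.2.1 t = u ∧ ω.2.2.1 = z}} =
          ⋂ (s : Fin n), ⋂ (t : Fin n), ⋂ (v : Fin n), ⋂ (u : W), ⋂ (z : (i : Fin m) → Z i),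
            {Q : MedOmega n m Z W → ℝ |
              prob Q {ω | ω.1 t = s ∧ ω.2.1 t = u ∧ ω.2.2.1 = z} *
                  prob Q {ω | ω.2.1 t = u ∧ ω.2.2.1 = z ∧ ω.2.2.2.2 = v} =
                prob Q {ω | ω.1 t = s ∧ ω.2.1 t = u ∧ ω.2.2.1 = z ∧ ω.2.2.2.2 = v} *
                  prob Q {ω | ω.2.1 t = u ∧ ω.2.2.1 = z}} := by
        ext Q; simp [Set.mem_iInter]
      rw [this]
      exact isClosed_iInter fun s => isClosed_iInter fun t => isClosed_iInter fun v =>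
        isClosed_iInter fun u => isClosed_iInter fun z =>
          isClosed_eq ((continuous_prob' _).mul (continuous_prob' _))
            ((continuous_prob' _).mul (continuous_prob' _))
    have h6 : IsClosed {Q : MedOmega n m Z W → ℝ |
        ∀ (s t t' : Fin n), t ≠ t' → ∀ (u v : W) (z : (i : Fin m) → Z i),
          prob Q {ω | ω.1 t = s ∧ ω.2.1 t = u ∧ ω.2.2.1 = z} *
              prob Q {ω | ω.2.1 t = u ∧ ω.2.1 t' = v ∧ ω.2.2.1 = z} =
            prob Q {ω | ω.1 t = s ∧ ω.2.1 t = u ∧ ω.2.1 t' = v ∧ ω.2.2.1 = z} *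
              prob Q {ω | ω.2.1 t = u ∧ ω.2.2.1 = z}} := by
      have : {Q : MedOmega n m Z W → ℝ |
          ∀ (s t t' : Fin n), t ≠ t' → ∀ (u v : W) (z : (i : Fin m) → Z i),
            prob Q {ω | ω.1 t = s ∧ ω.2.1 t = u ∧ ω.2.2.1 = z} *
                prob Q {ω | ω.2.1 t = u ∧ ω.2.1 t' = v ∧ ω.2.2.1 = z} =
              prob Q {ω | ω.1 t = s ∧ ω.2.1 t = u ∧ ω.2.1 t' = v ∧ ω.2.2.1 = z} *
                prob Q {ω | ω.2.1 t = u ∧ ω.2.2.1 = z}} =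
          ⋂ (s : Fin n), ⋂ (t : Fin n), ⋂ (t' : Fin n), ⋂ (_ : t ≠ t'), ⋂ (u : W), ⋂ (v : W),
            ⋂ (z : (i : Fin m) → Z i),
            {Q : MedOmega n m Z W → ℝ |
              prob Q {ω | ω.1 t = s ∧ ω.2.1 t = u ∧ ω.2.2.1 = z} *
                  prob Q {ω | ω.2.1 t = u ∧ ω.2.1 t' = v ∧ ω.2.2.1 = z} =
                prob Q {ω | ω.1 t = s ∧ ω.2.1 t = u ∧ ω.2.1 t' = v ∧ ω.2.2.1 = z} *
                  prob Q {ω | ω.2.1 t = u ∧ ω.2.2.1 = z}} := by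
        ext Q; simp [Set.mem_iInter]
      rw [this]
      exact isClosed_iInter fun s => isClosed_iInter fun t => isClosed_iInter fun t' =>
        isClosed_iInter fun _ => isClosed_iInter fun u => isClosed_iInter fun v =>
          isClosed_iInter fun z =>
            isClosed_eq ((continuous_prob' _).mul (continuous_prob' _))
              ((continuous_prob' _).mul (continuous_prob' _))
    have hEq : medFeasible n m Z W P =
        simplexSet (MedOmega n m Z W) ∩
        ({Q : MedOmega n m Z W → ℝ | ∀ ω, ω ∉ consEvent n m Z W → Q ω = 0} ∩
        ({Q | ∀ (s t : Fin n) (I : Finset (Fin m)) (zv : (i : Fin m) → Z i),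
          prob Q {ω | ω.1 t = s ∧ ∀ i ∈ I, ω.2.2.1 i = zv i} =
            prob P {ω | ω.1 t = s ∧ ∀ i ∈ I, ω.2.2.1 i = zv i}} ∩
        ({Q | ∀ (s t : Fin n) (u : W) (I : Finset (Fin m)) (zv : (i : Fin m) → Z i),
          prob Q {ω | ω.2.2.2.2 = t ∧ ω.1 t = s ∧ ω.2.1 t = u ∧ ∀ i ∈ I, ω.2.2.1 i = zv i} =
            prob P {ω | ω.2.2.2.2 = t ∧ ω.1 t = s ∧ ω.2.1 t = u ∧ ∀ i ∈ I, ω.2.2.1 i = zv i}} ∩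
        ({Q | ∀ (s t v : Fin n) (u : W) (z : (i : Fin m) → Z i),
          prob Q {ω | ω.1 t = s ∧ ω.2.1 t = u ∧ ω.2.2.1 = z} *
              prob Q {ω | ω.2.1 t = u ∧ ω.2.2.1 = z ∧ ω.2.2.2.2 = v} =
            prob Q {ω | ω.1 t = s ∧ ω.2.1 t = u ∧ ω.2.2.1 = z ∧ ω.2.2.2.2 = v} *
              prob Q {ω | ω.2.1 t = u ∧ ω.2.2.1 = z}} ∩
        {Q | ∀ (s t t' : Fin n), t ≠ t' → ∀ (u v : W) (z : (i : Fin m) → Z i),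
          prob Q {ω | ω.1 t = s ∧ ω.2.1 t = u ∧ ω.2.2.1 = z} *
              prob Q {ω | ω.2.1 t = u ∧ ω.2.1 t' = v ∧ ω.2.2.1 = z} =
            prob Q {ω | ω.1 t = s ∧ ω.2.1 t = u ∧ ω.2.1 t' = v ∧ ω.2.2.1 = z} *
              prob Q {ω | ω.2.1 t = u ∧ ω.2.2.1 = z}})))) := by
      ext Q
      simp only [medFeasible, Set.mem_setOf_eq, Set.mem_inter_iff]
    rw [hEq]
    exact hsimp.inter (h2.inter (h3.inter (h4.inter (h5.inter h6))))
  -- compactness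
  have hsub : medFeasible n m Z W P ⊆ simplexSet (MedOmega n m Z W) := fun Q hQ => hQ.1
  have hsimplexCompact : IsCompact (simplexSet (MedOmega n m Z W)) := by
    have : simplexSet (MedOmega n m Z W) = stdSimplex ℝ (MedOmega n m Z W) := rfl
    rw [this]; exact isCompact_stdSimplex _ _
  have hcompact : IsCompact (medFeasible n m Z W P) :=
    hsimplexCompact.of_isClosed_subset hclosed hsub
  -- extremes
  have hcont : ContinuousOn (fun Q : MedOmega n m Z W → ℝ => prob Q (pnsEventMed n m Z W k))
      (medFeasible n m Z W P) := (continuous_prob' _).continuousOn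
  obtain ⟨Qmin, hQmin, hmin⟩ := hcompact.exists_isMinOn hne hcont
  obtain ⟨Qmax, hQmax, hmax⟩ := hcompact.exists_isMaxOn hne hcont
  refine ⟨hPmem, hne, hcompact, prob Qmin (pnsEventMed n m Z W k),
    prob Qmax (pnsEventMed n m Z W k), ?_, ?_, ?_, ?_⟩
  · exact ⟨⟨Qmin, hQmin, rfl⟩, by rintro x ⟨Q, hQ, rfl⟩; exact hmin hQ⟩
  · exact ⟨⟨Qmax, hQmax, rfl⟩, by rintro x ⟨Q, hQ, rfl⟩; exact hmax hQ⟩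
  · exact hmin hPmem
  · exact hmax hPmem
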